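/- A signed graph Σ with connected underlying simple graph is distance-compatible if and only if every block of Σ is distance-compatible. -/

import Mathlib

open SimpleGraph

/-- The sign (product of edge signs) of a walk in a graph, computed along its darts. -/
def walkSign {V : Type*} {G : SimpleGraph V} (σ : V → V → ℤ) {u v : V} (p : G.Walk u v) : ℤ :=
  (p.darts.map fun d => σ d.toProd.1 d.toProd.2).prod

/-- `σ` is a signature on `G`: a symmetric function that is `±1`-valued on edges. -/
def IsSignature {V : Type*} (G : SimpleGraph V) (σ : V → V → ℤ) : Prop :=
  (∀ u v, σ u v = σ v u) ∧ ∀ u v, G.Adj u v → σ u v = 1 ∨ σ u v = -1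

/-- A signed graph is balanced when every cycle has sign `+1`. -/
def IsBalanced {V : Type*} (G : SimpleGraph V) (σ : V → V → ℤ) : Prop :=
  ∀ (u : V) (p : G.Walk u u), p.IsCycle → walkSign σ p = 1

/-- A walk is a shortest path when it is a path whose length is the graph distance
between its endpoints. -/
def IsShortestPath {V : Type*} {G : SimpleGraph V} {u v : V} (p : G.Walk u v) : Prop :=
  p.IsPath ∧ p.length = G.dist u v

open scoped Classical in
/-- `σmax u v = +1` if some shortest `u v`-path is positive, `-1` otherwise. -/
noncomputable def sigmaMax {V : Type*} (G : SimpleGraph V) (σ : V → V → ℤ) (u v : V) : ℤ :=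
  if ∃ p : G.Walk u v, IsShortestPath p ∧ walkSign σ p = 1 then 1 else -1

open scoped Classical in
/-- `σmin u v = +1` if all shortest `u v`-paths are positive, `-1` otherwise. -/
noncomputable def sigmaMin {V : Type*} (G : SimpleGraph V) (σ : V → V → ℤ) (u v : V) : ℤ :=
  if ∀ p : G.Walk u v, IsShortestPath p → walkSign σ p = 1 then 1 else -1

/-- The signed distance matrix `D^max`, with `(u,v)` entry `σmax(u,v)·d(u,v)`. -/
noncomputable def Dmax {V : Type*} (G : SimpleGraph V) (σ : V → V → ℤ) : Matrix V V ℝ :=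
  Matrix.of fun u v => (sigmaMax G σ u v : ℝ) * (G.dist u v : ℝ)

/-- The signed distance matrix `D^min`, with `(u,v)` entry `σmin(u,v)·d(u,v)`. -/
noncomputable def Dmin {V : Type*} (G : SimpleGraph V) (σ : V → V → ℤ) : Matrix V V ℝ :=
  Matrix.of fun u v => (sigmaMin G σ u v : ℝ) * (G.dist u v : ℝ)

/-- Two vertices are distance-compatible if all shortest paths between them have the
same sign. -/
def Compatible {V : Type*} (G : SimpleGraph V) (σ : V → V → ℤ) (u v : V) : Prop :=
  ∀ p q : G.Walk u v, IsShortestPath p → IsShortestPath q → walkSign σ p = walkSign σ q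

/-- A signed graph is distance-compatible if every pair of vertices is
distance-compatible. -/
def IsCompatibleGraph {V : Type*} (G : SimpleGraph V) (σ : V → V → ℤ) : Prop :=
  ∀ u v, Compatible G σ u v

/-- The largest eigenvalue of a (symmetric) real matrix: the supremum of the set of real
roots of its characteristic polynomial. -/
noncomputable def largestEigenvalue {n : Type*} [Fintype n] [DecidableEq n]
    (M : Matrix n n ℝ) : ℝ :=
  sSup {x : ℝ | M.charpoly.IsRoot x}

/-- A subgraph has no cutvertex when deleting any single vertex leaves it connected
(or empty). -/
def NoCutvertex {V : Type*} {G : SimpleGraph V} (B : G.Subgraph) : Prop :=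
  ∀ v ∈ B.verts, B.verts ⊆ {v} ∨ (B.deleteVerts {v}).Connected

/-- A block of a graph: a maximal connected subgraph without a cutvertex. -/
def IsBlock {V : Type*} {G : SimpleGraph V} (B : G.Subgraph) : Prop :=
  B.Connected ∧ NoCutvertex B ∧
    ∀ B' : G.Subgraph, B ≤ B' → B'.Connected → NoCutvertex B' → B' = B


-- ===================== auxiliary lemmas =====================

section Aux
variable {V : Type*} {G : SimpleGraph V}

@[simp] lemma walkSign_nil' {σ : V → V → ℤ} {u : V} :
    walkSign σ (Walk.nil : G.Walk u u) = 1 := rfl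

lemma walkSign_append {σ : V → V → ℤ} {u v w : V} (p : G.Walk u v) (q : G.Walk v w) :
    walkSign σ (p.append q) = walkSign σ p * walkSign σ q := by
  simp [walkSign, Walk.darts_append]

lemma walkSign_map {σ : V → V → ℤ} {V' : Type*} {G' : SimpleGraph V'} (f : G' →g G) {u v : V'}
    (q : G'.Walk u v) :
    walkSign σ (q.map f) = walkSign (fun x y => σ (f x) (f y)) q := by
  simp [walkSign, Walk.darts_map, List.map_map]
  rfl

lemma toSubgraph_le_deleteVerts {u v : V} {p : G.Walk u v} {H : G.Subgraph} {s : Set V}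
    (h : p.toSubgraph ≤ H) (hs : ∀ x ∈ p.support, x ∉ s) : p.toSubgraph ≤ H.deleteVerts s := by
  constructor
  · intro x hx
    rw [Walk.mem_verts_toSubgraph] at hx
    exact ⟨h.1 (by rw [Walk.mem_verts_toSubgraph]; exact hx), hs x hx⟩
  · intro x y hxy
    have hx := hxy.fst_mem
    have hy := hxy.snd_mem
    rw [Walk.mem_verts_toSubgraph] at hx hy
    have := h.2 hxy
    rw [SimpleGraph.Subgraph.deleteVerts_adj]
    exact ⟨this.fst_mem, hs x hx, this.snd_mem, hs y hy, this⟩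

lemma deleteVerts_not_mem {H : G.Subgraph} {v : V} (hv : v ∉ H.verts) :
    H.deleteVerts {v} = H := by
  ext x y
  · simp only [Subgraph.deleteVerts_verts, Set.mem_diff, Set.mem_singleton_iff,
      and_iff_left_iff_imp]
    rintro hx rfl; exact hv hx
  · rw [Subgraph.deleteVerts_adj]
    constructor
    · tauto
    · intro h
      exact ⟨h.fst_mem, fun he => hv (he ▸ h.fst_mem), h.snd_mem,
        fun he => hv (he ▸ h.snd_mem), h⟩

lemma toSubgraph_takeUntil_le [DecidableEq V] {u v w : V} (p : G.Walk u v) (h : w ∈ p.support) :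
    (p.takeUntil w h).toSubgraph ≤ p.toSubgraph := by
  conv_rhs => rw [← p.take_spec h]
  rw [Walk.toSubgraph_append]; exact le_sup_left

lemma toSubgraph_dropUntil_le [DecidableEq V] {u v w : V} (p : G.Walk u v) (h : w ∈ p.support) :
    (p.dropUntil w h).toSubgraph ≤ p.toSubgraph := by
  conv_rhs => rw [← p.take_spec h]
  rw [Walk.toSubgraph_append]; exact le_sup_right

lemma not_mem_takeUntil [DecidableEq V] {a b : V} {p : G.Walk a b} (hp : p.support.Nodup)
    {t x : V} (ht : t ∈ p.support) (hx : x ∈ (p.dropUntil t ht).support) (hxt : x ≠ t) :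
    x ∉ (p.takeUntil t ht).support := by
  intro hmem
  have hsplit : p.support = (p.takeUntil t ht).support ++ (p.dropUntil t ht).support.tail := by
    rw [← Walk.support_append, p.take_spec ht]
  rw [hsplit] at hp
  have hd := List.disjoint_of_nodup_append hp
  have : x ∈ (p.dropUntil t ht).support.tail := by
    have h := (p.dropUntil t ht).support_eq_cons
    rw [h, List.mem_cons] at hx
    exact hx.resolve_left hxt
  exact hd hmem this

lemma exists_last_exit [DecidableEq V] {B : G.Subgraph} {a c : V} (p : G.Walk a c)
    (hp : p.support.Nodup) (ha : a ∈ B.verts) :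
    ∃ (z : V) (hz : z ∈ p.support), z ∈ B.verts ∧
      ∀ t ∈ (p.dropUntil z hz).support, t ∈ B.verts → t = z := by
  classical
  set l := p.support.filter (fun x => decide (x ∈ B.verts)) with hl
  have hne : l ≠ [] :=
    List.ne_nil_of_mem (List.mem_filter.mpr ⟨p.start_mem_support, by simpa⟩)
  set z := l.getLast hne with hzdef
  have hzl : z ∈ l := List.getLast_mem hne
  have hz : z ∈ p.support := (List.mem_filter.mp hzl).1
  have hzB : z ∈ B.verts := by simpa using (List.mem_filter.mp hzl).2
  refine ⟨z, hz, hzB, ?_⟩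
  intro t htmem htB
  by_contra hne'
  have htail : t ∈ (p.dropUntil z hz).support.tail := by
    rw [(p.dropUntil z hz).support_eq_cons, List.mem_cons] at htmem
    exact htmem.resolve_left hne'
  have hsplit : p.support = (p.takeUntil z hz).support ++ (p.dropUntil z hz).support.tail := by
    rw [← Walk.support_append, p.take_spec hz]
  have h2 : l = ((p.takeUntil z hz).support.filter (fun x => decide (x ∈ B.verts))) ++
      ((p.dropUntil z hz).support.tail.filter (fun x => decide (x ∈ B.verts))) := by
    rw [hl, hsplit, List.filter_append]
  have hne2 : (p.dropUntil z hz).support.tail.filter (fun x => decide (x ∈ B.verts)) ≠ [] :=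
    List.ne_nil_of_mem (List.mem_filter.mpr ⟨htail, by simpa⟩)
  have hzin : z ∈ (p.dropUntil z hz).support.tail := by
    have hsome : l.getLast? = some z := List.getLast?_eq_getLast hne
    rw [h2, List.getLast?_append, List.getLast?_eq_getLast hne2] at hsome
    have hz2 : ((p.dropUntil z hz).support.tail.filter
        (fun x => decide (x ∈ B.verts))).getLast hne2 = z := by
      exact Option.some.inj hsome
    exact List.mem_of_mem_filter (hz2 ▸ List.getLast_mem hne2)
  rw [hsplit] at hp
  exact (List.disjoint_of_nodup_append hp)
    ((p.takeUntil z hz).end_mem_support) hzin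

lemma ear_lemma [DecidableEq V] {B : G.Subgraph} (hBc : B.Connected) (hNC : NoCutvertex B)
    {x y : V} (hx : x ∈ B.verts) (hy : y ∈ B.verts) (hxy : x ≠ y)
    (π : G.Walk x y) (hπ : π.IsPath) :
    (B ⊔ π.toSubgraph).Connected ∧ NoCutvertex (B ⊔ π.toSubgraph) := by
  refine ⟨Subgraph.connected_sup hBc.preconnected π.toSubgraph_connected.preconnected ⟨x, hx, π.start_mem_verts_toSubgraph⟩, ?_⟩
  intro v hv
  right
  have hBv : (B.deleteVerts {v}).Connected := by
    by_cases hvB : v ∈ B.verts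
    · rcases hNC v hvB with h | h
      · exact absurd ((h hx).trans (h hy).symm) hxy
      · exact h
    · rw [deleteVerts_not_mem hvB]; exact hBc
  obtain ⟨s, hsB, hsv⟩ : ∃ s, s ∈ B.verts ∧ s ≠ v := by
    by_cases hxv : x = v
    · exact ⟨y, hy, fun h => hxy (hxv.trans h.symm)⟩
    · exact ⟨x, hx, hxv⟩
  have claimA : ∀ t, t ∈ B.verts → t ≠ v →
      ∃ w : G.Walk t s, w.toSubgraph ≤ (B ⊔ π.toSubgraph).deleteVerts {v} := by
    intro t ht htv
    obtain ⟨w, hw⟩ := ((B.deleteVerts {v}).connected_iff_forall_exists_walk_subgraph.mp hBv).2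
      (by exact ⟨ht, htv⟩) (by exact ⟨hsB, hsv⟩)
    exact ⟨w, hw.trans (Subgraph.deleteVerts_mono le_sup_left)⟩
  have claimB : ∀ t, ∀ ht : t ∈ π.support, t ≠ v →
      ∃ w : G.Walk t s, w.toSubgraph ≤ (B ⊔ π.toSubgraph).deleteVerts {v} := by
    intro t ht htv
    by_cases htB : t ∈ B.verts
    · exact claimA t htB htv
    by_cases hvd : v ∈ (π.dropUntil t ht).support
    · have hvt : v ∉ (π.takeUntil t ht).support :=
        not_mem_takeUntil hπ.support_nodup ht hvd (fun h => htv h.symm)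
      have hxv : x ≠ v := fun h => hvt (h ▸ (π.takeUntil t ht).start_mem_support)
      obtain ⟨w1, hw1⟩ := claimA x hx hxv
      refine ⟨((π.takeUntil t ht).reverse).append w1, ?_⟩
      rw [Walk.toSubgraph_append, Walk.toSubgraph_reverse]
      refine sup_le ?_ hw1
      refine toSubgraph_le_deleteVerts ((toSubgraph_takeUntil_le π ht).trans le_sup_right) ?_
      intro u hu
      simp only [Set.mem_singleton_iff]
      rintro rfl; exact hvt hu
    · have hyv : y ≠ v := fun h => hvd (h ▸ (π.dropUntil t ht).end_mem_support)
      obtain ⟨w1, hw1⟩ := claimA y hy hyv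
      refine ⟨(π.dropUntil t ht).append w1, ?_⟩
      rw [Walk.toSubgraph_append]
      refine sup_le ?_ hw1
      refine toSubgraph_le_deleteVerts ((toSubgraph_dropUntil_le π ht).trans le_sup_right) ?_
      intro u hu
      simp only [Set.mem_singleton_iff]
      rintro rfl; exact hvd hu
  rw [Subgraph.connected_iff_forall_exists_walk_subgraph]
  have key : ∀ t, t ∈ (B ⊔ π.toSubgraph).verts → t ≠ v →
      ∃ w : G.Walk t s, w.toSubgraph ≤ (B ⊔ π.toSubgraph).deleteVerts {v} := by
    intro t ht htv
    rcases ht with htB | htπ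
    · exact claimA t htB htv
    · exact claimB t (by rwa [Walk.mem_verts_toSubgraph] at htπ) htv
  constructor
  · exact ⟨s, ⟨Or.inl hsB, hsv⟩⟩
  · intro t1 t2 h1 h2
    obtain ⟨w1, hw1⟩ := key t1 h1.1 h1.2
    obtain ⟨w2, hw2⟩ := key t2 h2.1 h2.2
    exact ⟨w1.append w2.reverse,
      by rw [Walk.toSubgraph_append, Walk.toSubgraph_reverse]; exact sup_le hw1 hw2⟩

end Aux


section Blocks

variable {V : Type*} {G : SimpleGraph V}

lemma IsBlock.adj_of_mem {B : G.Subgraph} (hB : IsBlock B) {x y : V}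
    (hx : x ∈ B.verts) (hy : y ∈ B.verts) (hadj : G.Adj x y) : B.Adj x y := by
  have hxy := hadj.ne
  set B' := B ⊔ G.subgraphOfAdj hadj with hB'
  have hverts : B'.verts = B.verts := by
    rw [hB']
    simp only [Subgraph.verts_sup, subgraphOfAdj_verts]
    rw [Set.union_eq_self_of_subset_right]
    intro t ht
    rcases ht with rfl | rfl
    · exact hx
    · exact hy
  have hconn : B'.Connected :=
    Subgraph.connected_sup hB.1.preconnected (Subgraph.subgraphOfAdj_connected hadj).preconnected ⟨x, hx, by simp⟩
  have hnc : NoCutvertex B' := by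
    intro v hv
    rw [hverts] at hv
    rcases hB.2.1 v hv with h | h
    · exact absurd ((h hx).trans (h hy).symm) hxy
    · right
      refine h.mono (Subgraph.deleteVerts_mono le_sup_left) ?_
      simp [Subgraph.deleteVerts_verts, hverts]
  have heq := hB.2.2 B' le_sup_left hconn hnc
  have : B'.Adj x y := Or.inr (by simp)
  rwa [heq] at this

lemma IsBlock.support_subset [DecidableEq V] {B : G.Subgraph} (hB : IsBlock B) {u v : V}
    (p : G.Walk u v) (hp : p.IsPath) (hu : u ∈ B.verts) (hv : v ∈ B.verts) :
    ∀ t ∈ p.support, t ∈ B.verts := by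
  by_contra hcon
  push_neg at hcon
  obtain ⟨w, hw, hwB⟩ := hcon
  set t1 := p.takeUntil w hw with ht1
  set t2 := p.dropUntil w hw with ht2
  obtain ⟨x, hxsup, hxB, hxafter⟩ := exists_last_exit t1 (hp.takeUntil hw).support_nodup hu
  obtain ⟨y, hysup, hyB, hyafter⟩ :=
    exists_last_exit t2.reverse ((hp.dropUntil hw).reverse).support_nodup hv
  set d1 := t1.dropUntil x hxsup with hd1
  set d2 := t2.reverse.dropUntil y hysup with hd2
  have hyw : y ≠ w := fun h => hwB (h ▸ hyB)
  have hyt2 : y ∈ t2.support := by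
    rw [Walk.support_reverse, List.mem_reverse] at hysup; exact hysup
  have hxy : x ≠ y := by
    intro h
    have hsplit : p.support = t1.support ++ t2.support.tail := by
      rw [← Walk.support_append, p.take_spec hw]
    have hnd := hp.support_nodup
    rw [hsplit] at hnd
    have hytail : y ∈ t2.support.tail := by
      rw [t2.support_eq_cons, List.mem_cons] at hyt2
      exact hyt2.resolve_left hyw
    exact (List.disjoint_of_nodup_append hnd) hxsup (h ▸ hytail)
  set E := d1.append d2.reverse with hE
  set π := E.bypass with hπdef
  have hπ : π.IsPath := Walk.bypass_isPath E
  have hside : ∀ t ∈ π.support, t ∈ B.verts → t = x ∨ t = y := by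
    intro t ht htB
    have htE := Walk.support_bypass_subset E ht
    rw [Walk.mem_support_append_iff] at htE
    rcases htE with h | h
    · exact Or.inl (hxafter t h htB)
    · rw [Walk.support_reverse, List.mem_reverse] at h
      exact Or.inr (hyafter t h htB)
  have hnew : ∃ t ∈ π.support, t ∉ B.verts := by
    by_contra hall
    push_neg at hall
    have hsub : ∀ t ∈ π.support, t = x ∨ t = y := fun t ht => hside t ht (hall t ht)
    have hlen1 : π.length ≤ 1 := by
      have hnd := hπ.support_nodup
      have hcard : π.support.toFinset.card = π.support.length := List.toFinset_card_of_nodup hnd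
      have hsubf : π.support.toFinset ⊆ {x, y} := by
        intro t ht
        rw [List.mem_toFinset] at ht
        rcases hsub t ht with rfl | rfl <;> simp
      have := Finset.card_le_card hsubf
      have h2 : ({x, y} : Finset V).card ≤ 2 := Finset.card_insert_le x {y} |>.trans (by simp)
      have := hcard ▸ (this.trans h2)
      rw [Walk.length_support] at this
      omega
    have hlen0 : π.length ≠ 0 := fun h => hxy (Walk.eq_of_length_eq_zero h)
    have hlen : π.length = 1 := by omega
    have hadj := Walk.toSubgraph_adj_getVert π (i := 0) (by omega)
    simp only [Walk.getVert_zero, zero_add] at hadj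
    rw [← hlen, Walk.getVert_length] at hadj
    have hedge : s(x, y) ∈ π.edges := by
      rw [← Walk.mem_edges_toSubgraph, Subgraph.mem_edgeSet]; exact hadj
    have hedgeE := Walk.edges_bypass_subset E hedge
    rw [Walk.edges_append, List.mem_append] at hedgeE
    rcases hedgeE with h | h
    · have : y ∈ d1.support := Walk.snd_mem_support_of_mem_edges d1 h
      exact hxy (hxafter y this hyB).symm
    · rw [Walk.edges_reverse, List.mem_reverse] at h
      have : x ∈ d2.support := Walk.fst_mem_support_of_mem_edges d2 h
      exact hxy (hyafter x this hxB)
  obtain ⟨t0, ht0, ht0B⟩ := hnew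
  obtain ⟨hC, hN⟩ := ear_lemma hB.1 hB.2.1 hxB hyB hxy π hπ
  have heq := hB.2.2 (B ⊔ π.toSubgraph) le_sup_left hC hN
  apply ht0B
  have : t0 ∈ (B ⊔ π.toSubgraph).verts := Or.inr (by rw [Walk.mem_verts_toSubgraph]; exact ht0)
  rwa [heq] at this

lemma IsBlock.toSubgraph_le [DecidableEq V] {B : G.Subgraph} (hB : IsBlock B) {u v : V}
    (p : G.Walk u v) (hp : p.IsPath) (hu : u ∈ B.verts) (hv : v ∈ B.verts) :
    p.toSubgraph ≤ B := by
  have hsup := hB.support_subset p hp hu hv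
  constructor
  · intro t ht
    rw [Walk.mem_verts_toSubgraph] at ht
    exact hsup t ht
  · intro a b hab
    have ha := hab.fst_mem
    have hb := hab.snd_mem
    rw [Walk.mem_verts_toSubgraph] at ha hb
    exact hB.adj_of_mem (hsup a ha) (hsup b hb) (p.toSubgraph.adj_sub hab)

end Blocks


section Lift
variable {V : Type*} {G : SimpleGraph V}

lemma exists_lift {B : G.Subgraph} {u v : V} (p : G.Walk u v) (hle : p.toSubgraph ≤ B)
    (hu : u ∈ B.verts) (hv : v ∈ B.verts) :
    ∃ q : B.coe.Walk ⟨u, hu⟩ ⟨v, hv⟩, q.map B.hom = p := by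
  induction p with
  | nil => exact ⟨Walk.nil, rfl⟩
  | @cons a b c h p ih =>
    have hadj : B.Adj a b := hle.2 (by simp)
    have hb : b ∈ B.verts := hadj.snd_mem
    obtain ⟨q, hq⟩ := ih (le_trans (le_sup_right :
      p.toSubgraph ≤ G.subgraphOfAdj h ⊔ p.toSubgraph) hle) hb hv
    exact ⟨Walk.cons ((Subgraph.coe_adj B ⟨a, hu⟩ ⟨b, hb⟩).mpr hadj) q,
      by simp [Walk.map_cons, hq]⟩

lemma IsBlock.dist_eq [DecidableEq V] (hG : G.Connected) {B : G.Subgraph} (hB : IsBlock B)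
    {u v : V} (hu : u ∈ B.verts) (hv : v ∈ B.verts) :
    B.coe.dist ⟨u, hu⟩ ⟨v, hv⟩ = G.dist u v := by
  apply le_antisymm
  · obtain ⟨p, hp, hl⟩ := hG.exists_path_of_dist u v
    have hsub := hB.toSubgraph_le p hp hu hv
    obtain ⟨q, hq⟩ := exists_lift p hsub hu hv
    calc B.coe.dist ⟨u, hu⟩ ⟨v, hv⟩ ≤ q.length := SimpleGraph.dist_le q
    _ = p.length := (Walk.length_map B.hom q).symm.trans (congrArg Walk.length hq)
    _ = G.dist u v := hl
  · have hr : B.coe.Reachable ⟨u, hu⟩ ⟨v, hv⟩ := hB.1.coe.preconnected _ _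
    obtain ⟨q, hq, hl⟩ := hr.exists_path_of_dist
    calc G.dist u v ≤ (q.map B.hom).length := SimpleGraph.dist_le _
    _ = q.length := by rw [Walk.length_map]
    _ = B.coe.dist ⟨u, hu⟩ ⟨v, hv⟩ := hl

/-- transfer of a shortest path into a block -/
lemma IsBlock.shortest_restrict [DecidableEq V] (hG : G.Connected) {B : G.Subgraph}
    (hB : IsBlock B) {σ : V → V → ℤ} {u v : V} (hu : u ∈ B.verts) (hv : v ∈ B.verts)
    (p : G.Walk u v) (hp : IsShortestPath p) :
    ∃ q : B.coe.Walk ⟨u, hu⟩ ⟨v, hv⟩, IsShortestPath q ∧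
      walkSign (fun x y => σ x.1 y.1) q = walkSign σ p := by
  obtain ⟨q, hq⟩ := exists_lift p (hB.toSubgraph_le p hp.1 hu hv) hu hv
  refine ⟨q, ⟨?_, ?_⟩, ?_⟩
  · have : (q.map B.hom).IsPath := hq ▸ hp.1
    exact this.of_map
  · rw [hB.dist_eq hG hu hv, ← hp.2]; exact (Walk.length_map B.hom q).symm.trans (congrArg Walk.length hq)
  · refine Eq.trans ?_ ((walkSign_map B.hom q).symm.trans (congrArg (walkSign σ) hq))
    rfl

/-- transfer of a shortest path out of a block -/
lemma IsBlock.shortest_extend [DecidableEq V] (hG : G.Connected) {B : G.Subgraph}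
    (hB : IsBlock B) {σ : V → V → ℤ} {u v : V} (hu : u ∈ B.verts) (hv : v ∈ B.verts)
    (q : B.coe.Walk ⟨u, hu⟩ ⟨v, hv⟩) (hq : IsShortestPath q) :
    IsShortestPath (q.map B.hom) ∧ walkSign σ (q.map B.hom) = walkSign (fun x y => σ x.1 y.1) q := by
  refine ⟨⟨Walk.map_isPath_of_injective Subgraph.hom_injective hq.1, ?_⟩, ?_⟩
  · rw [Walk.length_map, hq.2, hB.dist_eq hG hu hv]
    rfl
  · rw [walkSign_map]
    rfl

end Lift


section Zorn
variable {V : Type*} {G : SimpleGraph V}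

lemma noCutvertex_subgraphOfAdj {x y : V} (hadj : G.Adj x y) :
    NoCutvertex (G.subgraphOfAdj hadj) := by
  intro v hv
  right
  rw [Subgraph.connected_iff_forall_exists_walk_subgraph]
  simp only [Subgraph.deleteVerts_verts, subgraphOfAdj_verts] at *
  have hxy := hadj.ne
  obtain ⟨o, ho, hov⟩ : ∃ o, o ∈ ({x, y} : Set V) ∧ o ≠ v := by
    rcases hv with rfl | rfl
    · exact ⟨y, by simp, hxy ∘ Eq.symm⟩
    · exact ⟨x, by simp, hxy⟩
  have huniq : ∀ t, t ∈ ({x, y} : Set V) \ {v} → t = o := by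
    intro t ht
    obtain ⟨ht1, ht2⟩ := ht
    simp only [Set.mem_insert_iff, Set.mem_singleton_iff] at ht1 ht2
    have ho' : o = x ∨ o = y := by simpa using ho
    have hv' : v = x ∨ v = y := by simpa using hv
    rcases ht1 with rfl | rfl <;> rcases ho' with rfl | rfl <;> rcases hv' with h | h <;> tauto
  refine ⟨⟨o, ho, hov⟩, ?_⟩
  intro t1 t2 h1 h2
  have e1 := huniq t1 h1
  have e2 := huniq t2 h2
  subst e1; subst e2
  refine ⟨Walk.nil, ?_⟩
  rw [Walk.toSubgraph, singletonSubgraph_le_iff]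
  exact ⟨ho, hov⟩

lemma exists_block_of_adj {x y : V} (hadj : G.Adj x y) :
    ∃ B : G.Subgraph, IsBlock B ∧ B.Adj x y := by
  set e := G.subgraphOfAdj hadj with he
  set S : Set G.Subgraph := {B | B.Connected ∧ NoCutvertex B} with hS
  have heS : e ∈ S := ⟨Subgraph.subgraphOfAdj_connected hadj, noCutvertex_subgraphOfAdj hadj⟩
  have hchain : ∀ c ⊆ S, IsChain (· ≤ ·) c → ∀ y ∈ c, ∃ ub ∈ S, ∀ z ∈ c, z ≤ ub := by
    intro c hcS hch y0 hy0
    refine ⟨sSup c, ⟨?_, ?_⟩, fun z hz => le_sSup hz⟩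
    · rw [Subgraph.connected_iff_forall_exists_walk_subgraph]
      constructor
      · obtain ⟨t, ht⟩ := (hcS hy0).1.nonempty
        exact ⟨t, by rw [Subgraph.verts_sSup]; exact Set.mem_biUnion hy0 ht⟩
      · intro t1 t2 h1 h2
        rw [Subgraph.verts_sSup] at h1 h2
        obtain ⟨B1, hB1c, ht1⟩ := Set.mem_iUnion₂.mp h1
        obtain ⟨B2, hB2c, ht2⟩ := Set.mem_iUnion₂.mp h2
        obtain ⟨B, hBc, hm1, hm2⟩ : ∃ B ∈ c, t1 ∈ B.verts ∧ t2 ∈ B.verts := by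
          rcases hch.total hB1c hB2c with h | h
          · exact ⟨B2, hB2c, h.1 ht1, ht2⟩
          · exact ⟨B1, hB1c, ht1, h.1 ht2⟩
        obtain ⟨w, hw⟩ := ((B.connected_iff_forall_exists_walk_subgraph).mp (hcS hBc).1).2 hm1 hm2
        exact ⟨w, hw.trans (le_sSup hBc)⟩
    · intro v hv
      by_cases hall : (sSup c).verts ⊆ {v}
      · exact Or.inl hall
      right
      rw [Subgraph.connected_iff_forall_exists_walk_subgraph]
      constructor
      · obtain ⟨t, ht, htv⟩ := Set.not_subset.mp hall
        exact ⟨t, ht, htv⟩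
      · intro t1 t2 h1 h2
        obtain ⟨h1v, h1ne⟩ := h1
        obtain ⟨h2v, h2ne⟩ := h2
        rw [Subgraph.verts_sSup] at h1v h2v
        obtain ⟨B1, hB1c, ht1⟩ := Set.mem_iUnion₂.mp h1v
        obtain ⟨B2, hB2c, ht2⟩ := Set.mem_iUnion₂.mp h2v
        obtain ⟨B, hBc, hm1, hm2⟩ : ∃ B ∈ c, t1 ∈ B.verts ∧ t2 ∈ B.verts := by
          rcases hch.total hB1c hB2c with h | h
          · exact ⟨B2, hB2c, h.1 ht1, ht2⟩
          · exact ⟨B1, hB1c, ht1, h.1 ht2⟩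
        have hBv : (B.deleteVerts {v}).Connected := by
          by_cases hvB : v ∈ B.verts
          · rcases (hcS hBc).2 v hvB with h | h
            · exact absurd (h hm1) h1ne
            · exact h
          · rw [deleteVerts_not_mem hvB]; exact (hcS hBc).1
        obtain ⟨w, hw⟩ := ((B.deleteVerts {v}).connected_iff_forall_exists_walk_subgraph.mp
          hBv).2 (by exact ⟨hm1, h1ne⟩) (by exact ⟨hm2, h2ne⟩)
        exact ⟨w, hw.trans (Subgraph.deleteVerts_mono (le_sSup hBc))⟩
  obtain ⟨m, hem, hmax⟩ := zorn_le_nonempty₀ S hchain e heS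
  refine ⟨m, ⟨hmax.prop.1, hmax.prop.2, ?_⟩, hem.2 (by rw [he]; simp)⟩
  intro B' hle hc hnc
  exact le_antisymm (hmax.2 ⟨hc, hnc⟩ hle) hle

end Zorn


section Main
variable {V : Type*} {G : SimpleGraph V}

lemma IsBlock.no_outside_path [DecidableEq V] {B : G.Subgraph} (hB : IsBlock B) {x y : V}
    (hx : x ∈ B.verts) (hy : y ∈ B.verts) (hxy : x ≠ y) (W : G.Walk x y)
    (hside : ∀ t ∈ W.support, t ∈ B.verts → t = x ∨ t = y)
    (hedge : s(x, y) ∉ W.edges) : False := by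
  set π := W.bypass with hπdef
  have hπ : π.IsPath := Walk.bypass_isPath W
  have hπside : ∀ t ∈ π.support, t ∈ B.verts → t = x ∨ t = y :=
    fun t ht => hside t (Walk.support_bypass_subset W ht)
  have hnew : ∃ t ∈ π.support, t ∉ B.verts := by
    by_contra hall
    push_neg at hall
    have hsub : ∀ t ∈ π.support, t = x ∨ t = y := fun t ht => hπside t ht (hall t ht)
    have hlen1 : π.length ≤ 1 := by
      have hnd := hπ.support_nodup
      have hcard : π.support.toFinset.card = π.support.length := List.toFinset_card_of_nodup hnd
      have hsubf : π.support.toFinset ⊆ {x, y} := by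
        intro t ht
        rw [List.mem_toFinset] at ht
        rcases hsub t ht with rfl | rfl <;> simp
      have hcc := Finset.card_le_card hsubf
      have h2 : ({x, y} : Finset V).card ≤ 2 := Finset.card_insert_le x {y} |>.trans (by simp)
      have := hcard ▸ (hcc.trans h2)
      rw [Walk.length_support] at this
      omega
    have hlen0 : π.length ≠ 0 := fun h => hxy (Walk.eq_of_length_eq_zero h)
    have hlen : π.length = 1 := by omega
    have hadj := Walk.toSubgraph_adj_getVert π (i := 0) (by omega)
    simp only [Walk.getVert_zero, zero_add] at hadj
    rw [← hlen, Walk.getVert_length] at hadj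
    have hedge' : s(x, y) ∈ π.edges := by
      rw [← Walk.mem_edges_toSubgraph, Subgraph.mem_edgeSet]; exact hadj
    exact hedge (Walk.edges_bypass_subset W hedge')
  obtain ⟨t0, ht0, ht0B⟩ := hnew
  obtain ⟨hC, hN⟩ := ear_lemma hB.1 hB.2.1 hx hy hxy π hπ
  have heq := hB.2.2 (B ⊔ π.toSubgraph) le_sup_left hC hN
  apply ht0B
  have : t0 ∈ (B ⊔ π.toSubgraph).verts := Or.inr (by rw [Walk.mem_verts_toSubgraph]; exact ht0)
  rwa [heq] at this

lemma shortest_split [DecidableEq V] (hG : G.Connected) {u v z : V} (p : G.Walk u v)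
    (hp : IsShortestPath p) (hz : z ∈ p.support) :
    IsShortestPath (p.takeUntil z hz) ∧ IsShortestPath (p.dropUntil z hz) := by
  have hlen : (p.takeUntil z hz).length + (p.dropUntil z hz).length = p.length := by
    rw [← Walk.length_append, p.take_spec hz]
  have h1 : G.dist u z ≤ (p.takeUntil z hz).length := SimpleGraph.dist_le _
  have h2 : G.dist z v ≤ (p.dropUntil z hz).length := SimpleGraph.dist_le _
  have h3 : G.dist u v ≤ G.dist u z + G.dist z v := hG.dist_triangle
  have hd := hp.2
  exact ⟨⟨hp.1.takeUntil hz, by omega⟩, ⟨hp.1.dropUntil hz, by omega⟩⟩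

end Main

/-- A signed graph with connected underlying simple graph is
distance-compatible if and only if every block of it (with the induced signature) is
distance-compatible. -/
theorem compatible_iff_blocks_compatible {V : Type*} (G : SimpleGraph V)
    (σ : V → V → ℤ) (hσ : IsSignature G σ) (hG : G.Connected) :
    IsCompatibleGraph G σ ↔
      ∀ B : G.Subgraph, IsBlock B →
        IsCompatibleGraph B.coe (fun x y => σ x.1 y.1) := by
  classical
  constructor
  · -- G compatible → blocks compatible
    intro hC B hB u v p q hp hq
    have h1 := hB.shortest_extend hG (σ := σ) u.2 v.2 p hp
    have h2 := hB.shortest_extend hG (σ := σ) u.2 v.2 q hq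
    have := hC u.1 v.1 (p.map B.hom) (q.map B.hom) h1.1 h2.1
    have := h1.2.symm.trans (this.trans h2.2)
    exact this
  · -- blocks compatible → G compatible
    intro hblocks u₀ v₀ p₀ q₀ hp₀ hq₀
    suffices H : ∀ n : ℕ, ∀ u v : V, ∀ p q : G.Walk u v,
        IsShortestPath p → IsShortestPath q → p.length = n →
        walkSign σ p = walkSign σ q from H p₀.length u₀ v₀ p₀ q₀ hp₀ hq₀ rfl
    intro n
    induction n using Nat.strong_induction_on with
    | _ n IH =>
    intro u v p q hp hq hlen
    cases p with
    | nil =>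
      have hq0 : q.length = 0 := by rw [hq.2, SimpleGraph.dist_self]
      rw [Walk.nil_iff_eq_nil.mp (Walk.length_eq_zero_iff.mp hq0)]
    | @cons _ a _ h p' =>
      set P : G.Walk u v := Walk.cons h p' with hP
      obtain ⟨B, hB, hBadj⟩ := exists_block_of_adj h
      have hu : u ∈ B.verts := hBadj.fst_mem
      have haB : a ∈ B.verts := hBadj.snd_mem
      obtain ⟨z, hz, hzB, hzafter⟩ := exists_last_exit P hp.1.support_nodup hu
      obtain ⟨z', hz', hz'B, hz'after⟩ := exists_last_exit q hq.1.support_nodup hu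
      have hzz : z = z' := by
        by_cases hvB : v ∈ B.verts
        · have e1 : v = z := hzafter v (Walk.end_mem_support _) hvB
          have e2 : v = z' := hz'after v (Walk.end_mem_support _) hvB
          rw [← e1, ← e2]
        · by_contra hne
          set W := (P.dropUntil z hz).append (q.dropUntil z' hz').reverse with hW
          refine hB.no_outside_path hzB hz'B hne W ?_ ?_
          · intro t ht htB
            rw [Walk.mem_support_append_iff] at ht
            rcases ht with ht | ht
            · exact Or.inl (hzafter t ht htB)
            · rw [Walk.support_reverse, List.mem_reverse] at ht
              exact Or.inr (hz'after t ht htB)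
          · intro hedge
            rw [Walk.edges_append, List.mem_append] at hedge
            rcases hedge with hedge | hedge
            · have : z' ∈ (P.dropUntil z hz).support :=
                Walk.snd_mem_support_of_mem_edges _ hedge
              exact hne (hzafter z' this hz'B).symm
            · rw [Walk.edges_reverse, List.mem_reverse] at hedge
              have : z ∈ (q.dropUntil z' hz').support :=
                Walk.fst_mem_support_of_mem_edges _ hedge
              exact hne (hz'after z this hzB)
      subst hzz
      have hzu : z ≠ u := by
        rintro rfl
        have htake : P.takeUntil z hz = Walk.nil :=
          Walk.isPath_iff_eq_nil.mp (hp.1.takeUntil hz)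
        have hsplit : P.support = (P.takeUntil z hz).support ++ (P.dropUntil z hz).support.tail := by
          rw [← Walk.support_append, P.take_spec hz]
        rw [htake] at hsplit
        have hPs : P.support = z :: p'.support := rfl
        rw [hPs] at hsplit
        simp only [Walk.support_nil, List.singleton_append, List.cons.injEq, true_and] at hsplit
        have haP : a ∈ (P.dropUntil z hz).support.tail := by
          rw [← hsplit]; exact p'.start_mem_support
        have := hzafter a (List.mem_of_mem_tail haP) haB
        exact h.ne this.symm
      obtain ⟨hp1, hp2⟩ := shortest_split hG P hp hz
      obtain ⟨hq1, hq2⟩ := shortest_split hG q hq hz'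
      -- the two middle parts have equal sign by induction
      have hlt : (P.dropUntil z hz).length < n := by
        have hlensum : (P.takeUntil z hz).length + (P.dropUntil z hz).length = P.length := by
          rw [← Walk.length_append, P.take_spec hz]
        have htne : (P.takeUntil z hz).length ≠ 0 :=
          fun h0 => hzu (Walk.eq_of_length_eq_zero h0).symm
        omega
      have hmid : walkSign σ (P.dropUntil z hz) = walkSign σ (q.dropUntil z hz') :=
        IH _ hlt z v _ _ hp2 hq2 rfl
      -- the two initial parts have equal sign by block compatibility
      obtain ⟨r1, hr1, hsign1⟩ := hB.shortest_restrict hG (σ := σ) hu hzB (P.takeUntil z hz) hp1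
      obtain ⟨r2, hr2, hsign2⟩ := hB.shortest_restrict hG (σ := σ) hu hzB (q.takeUntil z hz') hq1
      have hblk := hblocks B hB ⟨u, hu⟩ ⟨z, hzB⟩ r1 r2 hr1 hr2
      have hini : walkSign σ (P.takeUntil z hz) = walkSign σ (q.takeUntil z hz') := by
        rw [← hsign1, ← hsign2, hblk]
      calc walkSign σ P = walkSign σ ((P.takeUntil z hz).append (P.dropUntil z hz)) := by
            rw [P.take_spec hz]
      _ = walkSign σ (P.takeUntil z hz) * walkSign σ (P.dropUntil z hz) := walkSign_append _ _
      _ = walkSign σ (q.takeUntil z hz') * walkSign σ (q.dropUntil z hz') := by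
            rw [hmid, hini]
      _ = walkSign σ ((q.takeUntil z hz').append (q.dropUntil z hz')) := (walkSign_append _ _).symm
      _ = walkSign σ q := by rw [q.take_spec hz']
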